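/- Let Δ be an irreducible reduced root system of simply laced type and rank at least 2, with Weyl group W, and let D be a linear hyperplane in the span of Δ. Then W cannot stabilize the union D ∪ D⊥; in particular there exist w ∈ W and a root α with w·α ∉ D ∪ D⊥. -/

import Mathlib

open scoped RealInnerProductSpace

/-- A (reduced, crystallographic) root system `Δ` in a real inner product space. -/
structure IsRootSystem (V : Type*) [NormedAddCommGroup V] [InnerProductSpace ℝ V]
    (Δ : Set V) : Prop where
  finite : Δ.Finite
  span_top : Submodule.span ℝ Δ = ⊤
  zero_not_mem : (0 : V) ∉ Δ
  reflection_mem : ∀ α ∈ Δ, ∀ β ∈ Δ, β - (2 * ⟪β, α⟫ / ⟪α, α⟫) • α ∈ Δ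
  integral : ∀ α ∈ Δ, ∀ β ∈ Δ, ∃ z : ℤ, 2 * ⟪β, α⟫ / ⟪α, α⟫ = (z : ℝ)
  reduced : ∀ α ∈ Δ, ∀ c : ℝ, c • α ∈ Δ → c = 1 ∨ c = -1

/-- The reflections in the roots belonging to `Δ`, as linear automorphisms. -/
def weylReflections (V : Type*) [NormedAddCommGroup V] [InnerProductSpace ℝ V]
    (Δ : Set V) : Set (V ≃ₗ[ℝ] V) :=
  {f | ∃ α ∈ Δ, ∀ v : V, f v = v - (2 * ⟪v, α⟫ / ⟪α, α⟫) • α}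

section Aux
variable {V : Type*} [NormedAddCommGroup V] [InnerProductSpace ℝ V]

noncomputable def sReflMap (γ : V) : V →ₗ[ℝ] V where
  toFun x := x - (2 * ⟪x, γ⟫ / ⟪γ, γ⟫) • γ
  map_add' x y := by
    have h : 2 * ⟪x + y, γ⟫ / ⟪γ, γ⟫ = 2 * ⟪x, γ⟫ / ⟪γ, γ⟫ + 2 * ⟪y, γ⟫ / ⟪γ, γ⟫ := by
      rw [inner_add_left]; ring
    rw [h, add_smul]; abel
  map_smul' r x := by
    have h : 2 * ⟪r • x, γ⟫ / ⟪γ, γ⟫ = r * (2 * ⟪x, γ⟫ / ⟪γ, γ⟫) := by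
      rw [real_inner_smul_left]; ring
    simp only [RingHom.id_apply, h, mul_smul, smul_sub]

lemma sReflMap_involutive (γ : V) : Function.Involutive (sReflMap γ) := by
  intro x
  by_cases hγ : γ = 0
  · simp [sReflMap, hγ]
  · have hQ : ⟪γ, γ⟫ ≠ 0 := by rwa [ne_eq, inner_self_eq_zero]
    show sReflMap γ (x - (2 * ⟪x, γ⟫ / ⟪γ, γ⟫) • γ) = x
    have key : ⟪x - (2 * ⟪x, γ⟫ / ⟪γ, γ⟫) • γ, γ⟫ = -⟪x, γ⟫ := by
      rw [inner_sub_left, real_inner_smul_left]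
      field_simp
      ring
    show (x - (2 * ⟪x, γ⟫ / ⟪γ, γ⟫) • γ)
        - (2 * ⟪x - (2 * ⟪x, γ⟫ / ⟪γ, γ⟫) • γ, γ⟫ / ⟪γ, γ⟫) • γ = x
    rw [key]
    have h2 : 2 * -⟪x, γ⟫ / ⟪γ, γ⟫ = -(2 * ⟪x, γ⟫ / ⟪γ, γ⟫) := by ring
    rw [h2, neg_smul, sub_neg_eq_add]
    abel

noncomputable def sRefl (γ : V) : V ≃ₗ[ℝ] V :=
  LinearEquiv.ofInvolutive (sReflMap γ) (sReflMap_involutive γ)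

@[simp] lemma sRefl_apply (γ x : V) :
    sRefl γ x = x - (2 * ⟪x, γ⟫ / ⟪γ, γ⟫) • γ := rfl

lemma sRefl_inner (γ x y : V) : ⟪sRefl γ x, sRefl γ y⟫ = ⟪x, y⟫ := by
  by_cases hγ : γ = 0
  · simp [hγ]
  · have hQ : ⟪γ, γ⟫ ≠ 0 := by rwa [ne_eq, inner_self_eq_zero]
    rw [sRefl_apply, sRefl_apply, inner_sub_left, inner_sub_right, inner_sub_right,
      real_inner_smul_left, real_inner_smul_left, real_inner_smul_right,
      real_inner_smul_right, real_inner_comm γ y]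
    field_simp
    ring

lemma submodule_le_or_le_of_subset_union (K p q : Submodule ℝ V)
    (h : (K : Set V) ⊆ (p : Set V) ∪ (q : Set V)) : K ≤ p ∨ K ≤ q := by
  by_contra hc
  push_neg at hc
  obtain ⟨hp, hq⟩ := hc
  rw [SetLike.not_le_iff_exists] at hp hq
  obtain ⟨x, hxK, hxp⟩ := hp
  obtain ⟨y, hyK, hyq⟩ := hq
  have hxq : x ∈ q := by
    rcases h hxK with h1 | h1
    · exact absurd h1 hxp
    · exact h1
  have hyp : y ∈ p := by
    rcases h hyK with h1 | h1
    · exact h1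
    · exact absurd h1 hyq
  rcases h (K.add_mem hxK hyK) with h1 | h1
  · exact hxp (by simpa using p.sub_mem h1 hyp)
  · exact hyq (by simpa using q.sub_mem h1 hxq)

lemma int_sq_ne_two (z : ℤ) : ((z : ℝ))^2 ≠ 2 := by
  intro h
  have h2 : z^2 = 2 := by exact_mod_cast h
  have h3 : (z - 1) * (z + 1) = 1 := by nlinarith
  rcases Int.mul_eq_one_iff_eq_one_or_neg_one.1 h3 with ⟨h4, h5⟩ | ⟨h4, h5⟩ <;> omega

lemma mem_span_of_inner_eq (x y : V) (hx : x ≠ 0)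
    (h : ⟪x, y⟫ = ‖x‖ * ‖y‖ ∨ ⟪x, y⟫ = -(‖x‖ * ‖y‖)) : y ∈ (ℝ ∙ x) := by
  have hnx : ‖x‖ ≠ 0 := norm_ne_zero_iff.2 hx
  rcases h with h | h
  · have h1 : ‖y‖ • x = ‖x‖ • y := inner_eq_norm_mul_iff_real.1 h
    refine Submodule.mem_span_singleton.2 ⟨‖x‖⁻¹ * ‖y‖, ?_⟩
    calc (‖x‖⁻¹ * ‖y‖) • x = ‖x‖⁻¹ • (‖y‖ • x) := by rw [mul_smul]
      _ = ‖x‖⁻¹ • (‖x‖ • y) := by rw [h1]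
      _ = y := by rw [smul_smul, inv_mul_cancel₀ hnx, one_smul]
  · have h' : ⟪x, -y⟫ = ‖x‖ * ‖-y‖ := by
      rw [inner_neg_right, norm_neg, h]; ring
    have h1 : ‖-y‖ • x = ‖x‖ • (-y) := inner_eq_norm_mul_iff_real.1 h'
    rw [norm_neg] at h1
    refine Submodule.mem_span_singleton.2 ⟨-(‖x‖⁻¹ * ‖y‖), ?_⟩
    have h2 : ‖y‖ • x = -(‖x‖ • y) := by rw [h1, smul_neg]
    calc (-(‖x‖⁻¹ * ‖y‖)) • x = -(‖x‖⁻¹ • (‖y‖ • x)) := by rw [neg_smul, mul_smul]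
      _ = -(‖x‖⁻¹ • (-(‖x‖ • y))) := by rw [h2]
      _ = ‖x‖⁻¹ • (‖x‖ • y) := by rw [smul_neg, neg_neg]
      _ = y := by rw [smul_smul, inv_mul_cancel₀ hnx, one_smul]

lemma refl_span_part1 (γ u : V) (hγu : ⟪u, γ⟫ ≠ 0)
    (hs : sRefl γ u ∈ (ℝ ∙ u)) : γ ∈ (ℝ ∙ u) := by
  have hγ0 : γ ≠ 0 := by rintro rfl; simp at hγu
  have hQ : ⟪γ, γ⟫ ≠ 0 := by rwa [ne_eq, inner_self_eq_zero]
  have hc : 2 * ⟪u, γ⟫ / ⟪γ, γ⟫ ≠ 0 := by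
    apply div_ne_zero _ hQ
    exact mul_ne_zero two_ne_zero hγu
  obtain ⟨t, ht⟩ := Submodule.mem_span_singleton.1 hs
  rw [sRefl_apply] at ht
  -- t • u = u - c • γ
  refine Submodule.mem_span_singleton.2 ⟨(2 * ⟪u, γ⟫ / ⟪γ, γ⟫)⁻¹ * (1 - t), ?_⟩
  have h1 : (2 * ⟪u, γ⟫ / ⟪γ, γ⟫) • γ = (1 - t) • u := by
    rw [sub_smul, one_smul, ht]; abel
  rw [mul_smul, ← h1, smul_smul, inv_mul_cancel₀ hc, one_smul]

lemma refl_span_part2 (γ u : V) (hs : sRefl γ u ∈ (ℝ ∙ u)ᗮ) (hγ0 : γ ≠ 0) :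
    2 * ⟪u, γ⟫ ^ 2 = ⟪u, u⟫ * ⟪γ, γ⟫ := by
  have hQ : ⟪γ, γ⟫ ≠ 0 := by rwa [ne_eq, inner_self_eq_zero]
  have h0 : ⟪u, sRefl γ u⟫ = 0 :=
    Submodule.mem_orthogonal_singleton_iff_inner_right.1 hs
  rw [sRefl_apply, inner_sub_right, real_inner_smul_right] at h0
  have h1 : ⟪u, u⟫ * ⟪γ, γ⟫ - 2 * ⟪u, γ⟫ * ⟪u, γ⟫ = 0 := by
    have := h0
    field_simp at this
    linarith
  nlinarith [h1]

end Aux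

/-- The Weyl group of an irreducible, reduced, simply laced root system of rank
at least `2` cannot stabilize `D ∪ D⊥` for a hyperplane `D`; in particular some
Weyl image of some root lies outside `D ∪ D⊥`. -/
theorem stmt12 {V : Type*} [NormedAddCommGroup V] [InnerProductSpace ℝ V]
    [FiniteDimensional ℝ V] (Δ : Set V) (hRS : IsRootSystem V Δ)
    (hirr : ∀ Δ₁ Δ₂ : Set V, Δ = Δ₁ ∪ Δ₂ →
      (∀ α ∈ Δ₁, ∀ β ∈ Δ₂, ⟪α, β⟫ = 0) → Δ₁ = ∅ ∨ Δ₂ = ∅)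
    (hsl : ∀ α ∈ Δ, ∀ β ∈ Δ, ‖α‖ = ‖β‖)
    (hrank : 2 ≤ Module.finrank ℝ V)
    (D : Submodule ℝ V) (hD : Module.finrank ℝ D = Module.finrank ℝ V - 1) :
    (¬ ∀ w ∈ Subgroup.closure (weylReflections V Δ),
        (w : V ≃ₗ[ℝ] V) '' ((D : Set V) ∪ (Dᗮ : Set V)) = (D : Set V) ∪ (Dᗮ : Set V)) ∧
    ∃ w ∈ Subgroup.closure (weylReflections V Δ), ∃ α ∈ Δ,
      (w : V ≃ₗ[ℝ] V) α ∉ (D : Set V) ∪ (Dᗮ : Set V) := by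
  classical
  have hfrO : Module.finrank ℝ Dᗮ = 1 := by
    have hsum := D.finrank_add_finrank_orthogonal
    omega
  -- a generator of Dᗮ
  obtain ⟨u, huO, hu0⟩ : ∃ u ∈ Dᗮ, u ≠ 0 :=
    Submodule.exists_mem_ne_zero_of_ne_bot (fun hbot => by
      rw [hbot, finrank_bot] at hfrO; omega)
  have huspan : Dᗮ = (ℝ ∙ u) := by
    refine (Submodule.eq_of_le_of_finrank_le ?_ ?_).symm
    · rwa [Submodule.span_singleton_le_iff_mem]
    · rw [hfrO, finrank_span_singleton hu0]
  have hDeq : D = (ℝ ∙ u)ᗮ := by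
    rw [← huspan, Submodule.orthogonal_orthogonal]
  have hmemD : ∀ x : V, x ∈ D ↔ ⟪u, x⟫ = 0 := by
    intro x; rw [hDeq]; exact Submodule.mem_orthogonal_singleton_iff_inner_right
  have hQ : ∀ γ ∈ Δ, γ ≠ 0 := by
    intro γ hγ h0; exact hRS.zero_not_mem (h0 ▸ hγ)
  -- Lemma 0 : some root lies outside D ∪ Dᗮ
  have hexists : ∃ α ∈ Δ, α ∉ (D : Set V) ∪ (Dᗮ : Set V) := by
    by_contra hall
    push_neg at hall
    have hsplit : Δ = (Δ ∩ (D : Set V)) ∪ (Δ ∩ (Dᗮ : Set V)) := by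
      ext x
      constructor
      · intro hx
        rcases hall x hx with h | h
        · exact Or.inl ⟨hx, h⟩
        · exact Or.inr ⟨hx, h⟩
      · rintro (⟨h, -⟩ | ⟨h, -⟩) <;> exact h
    have horth : ∀ a ∈ Δ ∩ (D : Set V), ∀ b ∈ Δ ∩ (Dᗮ : Set V), ⟪a, b⟫ = 0 := by
      intro a ha b hb
      exact (Submodule.mem_orthogonal D b).1 hb.2 a ha.2
    rcases hirr _ _ hsplit horth with h | h
    · -- Δ ⊆ Dᗮ
      have hsub : Δ ⊆ (Dᗮ : Set V) := by
        intro x hx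
        rcases hall x hx with h1 | h1
        · rw [Set.eq_empty_iff_forall_notMem] at h
          exact absurd ⟨hx, h1⟩ (h x)
        · exact h1
      have htop : Dᗮ = ⊤ :=
        top_le_iff.mp (hRS.span_top ▸ Submodule.span_le.2 hsub)
      rw [htop, finrank_top] at hfrO
      omega
    · have hsub : Δ ⊆ (D : Set V) := by
        intro x hx
        rcases hall x hx with h1 | h1
        · exact h1
        · rw [Set.eq_empty_iff_forall_notMem] at h
          exact absurd ⟨hx, h1⟩ (h x)
      have htop : D = ⊤ :=
        top_le_iff.mp (hRS.span_top ▸ Submodule.span_le.2 hsub)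
      rw [htop, finrank_top] at hD
      omega
  obtain ⟨α, hαΔ, hαS⟩ := hexists
  constructor
  swap
  · exact ⟨1, Subgroup.one_mem _, α, hαΔ, by simpa using hαS⟩
  intro H
  -- each reflection maps D ∪ Dᗮ into itself
  have hmaps : ∀ γ ∈ Δ, ∀ x : V, x ∈ (D : Set V) ∪ (Dᗮ : Set V) →
      sRefl γ x ∈ (D : Set V) ∪ (Dᗮ : Set V) := by
    intro γ hγ x hx
    have hcl : sRefl γ ∈ Subgroup.closure (weylReflections V Δ) :=
      Subgroup.subset_closure ⟨γ, hγ, fun v => rfl⟩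
    have himg := H _ hcl
    rw [← himg]
    exact Set.mem_image_of_mem _ hx
  have hαD : ⟪u, α⟫ ≠ 0 := by
    intro h0
    exact hαS (Or.inl ((hmemD α).2 h0))
  -- key property E_u for roots outside D ∪ Dᗮ
  have hEu : ∀ γ ∈ Δ, γ ∉ (D : Set V) ∪ (Dᗮ : Set V) →
      2 * ⟪u, γ⟫ ^ 2 = ⟪u, u⟫ * ⟪γ, γ⟫ := by
    intro γ hγ hγS
    have huS : u ∈ (D : Set V) ∪ (Dᗮ : Set V) := Or.inr huO
    rcases hmaps γ hγ u huS with h | h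
    · rw [hDeq] at h
      exact refl_span_part2 γ u h (hQ γ hγ)
    · exfalso
      have hγu : ⟪u, γ⟫ ≠ 0 := by
        intro h0
        exact hγS (Or.inl ((hmemD γ).2 h0))
      rw [huspan] at h
      exact hγS (Or.inr (by rw [huspan]; exact refl_span_part1 γ u hγu h))
  rcases lt_or_ge 2 (Module.finrank ℝ V) with h3 | h2
  · -- rank ≥ 3 : contradiction via the hyperplane D
    have hsub : (D : Set V) ⊆
        ((D.comap (sRefl α).toLinearMap : Submodule ℝ V) : Set V) ∪
        ((Dᗮ.comap (sRefl α).toLinearMap : Submodule ℝ V) : Set V) := by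
      intro x hx
      rcases hmaps α hαΔ x (Or.inl hx) with h | h
      · exact Or.inl h
      · exact Or.inr h
    rcases submodule_le_or_le_of_subset_union _ _ _ hsub with hle | hle
    · -- sRefl α maps D to D, hence u into Dᗮ, hence α ∈ Dᗮ, contradiction
      have hmaple : D.map (sRefl α).toLinearMap ≤ D := Submodule.map_le_iff_le_comap.2 hle
      have hfr : Module.finrank ℝ (D.map (sRefl α).toLinearMap) = Module.finrank ℝ D :=
        LinearEquiv.finrank_map_eq _ _
      have hmapeq : D.map (sRefl α).toLinearMap = D :=
        Submodule.eq_of_le_of_finrank_le hmaple (by rw [hfr])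
      have hsu : sRefl α u ∈ Dᗮ := by
        rw [Submodule.mem_orthogonal]
        intro v hv
        rw [← hmapeq] at hv
        obtain ⟨x, hxD, rfl⟩ := hv
        have : ⟪(sRefl α).toLinearMap x, sRefl α u⟫ = ⟪x, u⟫ := sRefl_inner α x u
        rw [this]
        exact (Submodule.mem_orthogonal D u).1 huO x hxD
      rw [huspan] at hsu
      exact hαS (Or.inr (by rw [huspan]; exact refl_span_part1 α u hαD hsu))
    · -- impossible for dimension reasons
      have hfr : Module.finrank ℝ (Dᗮ.comap (sRefl α).toLinearMap : Submodule ℝ V) = 1 := by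
        rw [Submodule.comap_equiv_eq_map_symm, LinearEquiv.finrank_map_eq, hfrO]
      have := Submodule.finrank_mono hle
      rw [hfr, hD] at this
      omega
  · -- rank = 2
    have hn2 : Module.finrank ℝ V = 2 := le_antisymm h2 hrank
    have hfrD : Module.finrank ℝ D = 1 := by omega
    obtain ⟨d, hdD, hd0⟩ : ∃ d ∈ D, d ≠ 0 :=
      Submodule.exists_mem_ne_zero_of_ne_bot (fun hbot => by
        rw [hbot, finrank_bot] at hfrD; omega)
    have hdspan : D = (ℝ ∙ d) := by
      refine (Submodule.eq_of_le_of_finrank_le ?_ ?_).symm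
      · rwa [Submodule.span_singleton_le_iff_mem]
      · rw [hfrD, finrank_span_singleton hd0]
    have hOeq : Dᗮ = (ℝ ∙ d)ᗮ := by rw [← hdspan]
    have hmemO : ∀ x : V, x ∈ Dᗮ ↔ ⟪d, x⟫ = 0 := by
      intro x; rw [hOeq]; exact Submodule.mem_orthogonal_singleton_iff_inner_right
    have hdu : ⟪d, u⟫ = 0 := (hmemO u).1 huO
    have hCd : ⟪d, d⟫ ≠ 0 := by rwa [ne_eq, inner_self_eq_zero]
    have hCu : ⟪u, u⟫ ≠ 0 := by rwa [ne_eq, inner_self_eq_zero]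
    -- E_d for roots outside D ∪ Dᗮ
    have hEd : ∀ γ ∈ Δ, γ ∉ (D : Set V) ∪ (Dᗮ : Set V) →
        2 * ⟪d, γ⟫ ^ 2 = ⟪d, d⟫ * ⟪γ, γ⟫ := by
      intro γ hγ hγS
      have hdS : d ∈ (D : Set V) ∪ (Dᗮ : Set V) := Or.inl hdD
      rcases hmaps γ hγ d hdS with h | h
      · exfalso
        have hγd : ⟪d, γ⟫ ≠ 0 := by
          intro h0
          exact hγS (Or.inr ((hmemO γ).2 h0))
        rw [hdspan] at h
        exact hγS (Or.inl (by rw [hdspan]; exact refl_span_part1 γ d hγd h))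
      · rw [hOeq] at h
        exact refl_span_part2 γ d h (hQ γ hγ)
    -- no root lies in D ∪ Dᗮ
    have hallout : ∀ β ∈ Δ, β ∉ (D : Set V) ∪ (Dᗮ : Set V) := by
      intro β hβ hβS
      have hA : ⟪α, α⟫ ≠ 0 := by rw [ne_eq, inner_self_eq_zero]; exact hQ α hαΔ
      have hNN : ⟪α, α⟫ = ⟪β, β⟫ := by
        rw [real_inner_self_eq_norm_mul_norm, real_inner_self_eq_norm_mul_norm,
          hsl α hαΔ β hβ]
      obtain ⟨z, hz⟩ := hRS.integral α hαΔ β hβ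
      rw [div_eq_iff hA] at hz
      rcases hβS with hβD | hβO
      · obtain ⟨t, ht⟩ := Submodule.mem_span_singleton.1 (by rw [← hdspan]; exact hβD)
        have hβα : ⟪β, α⟫ = t * ⟪d, α⟫ := by rw [← ht, real_inner_smul_left]
        have hββ : ⟪β, β⟫ = t ^ 2 * ⟪d, d⟫ := by
          rw [← ht, real_inner_smul_left, real_inner_smul_right]; ring
        have e1 : (z : ℝ) * ⟪α, α⟫ = 2 * t * ⟪d, α⟫ := by
          rw [← hz, hβα]; ring
        have e2 : ⟪α, α⟫ = t ^ 2 * ⟪d, d⟫ := hNN.trans hββ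
        have e3 : 2 * ⟪d, α⟫ ^ 2 = ⟪d, d⟫ * ⟪α, α⟫ := hEd α hαΔ hαS
        refine int_sq_ne_two z ?_
        have h6 : (z : ℝ) ^ 2 * (⟪α, α⟫ * ⟪α, α⟫) = 2 * (⟪α, α⟫ * ⟪α, α⟫) := by
          linear_combination ((z : ℝ) * ⟪α, α⟫ + 2 * t * ⟪d, α⟫) * e1 + 2 * t ^ 2 * e3 -
            2 * ⟪α, α⟫ * e2
        exact mul_right_cancel₀ (mul_ne_zero hA hA) h6
      · obtain ⟨t, ht⟩ := Submodule.mem_span_singleton.1 (by rw [← huspan]; exact hβO)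
        have hβα : ⟪β, α⟫ = t * ⟪u, α⟫ := by rw [← ht, real_inner_smul_left]
        have hββ : ⟪β, β⟫ = t ^ 2 * ⟪u, u⟫ := by
          rw [← ht, real_inner_smul_left, real_inner_smul_right]; ring
        have e1 : (z : ℝ) * ⟪α, α⟫ = 2 * t * ⟪u, α⟫ := by
          rw [← hz, hβα]; ring
        have e2 : ⟪α, α⟫ = t ^ 2 * ⟪u, u⟫ := hNN.trans hββ
        have e3 : 2 * ⟪u, α⟫ ^ 2 = ⟪u, u⟫ * ⟪α, α⟫ := hEu α hαΔ hαS
        refine int_sq_ne_two z ?_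
        have h6 : (z : ℝ) ^ 2 * (⟪α, α⟫ * ⟪α, α⟫) = 2 * (⟪α, α⟫ * ⟪α, α⟫) := by
          linear_combination ((z : ℝ) * ⟪α, α⟫ + 2 * t * ⟪u, α⟫) * e1 + 2 * t ^ 2 * e3 -
            2 * ⟪α, α⟫ * e2
        exact mul_right_cancel₀ (mul_ne_zero hA hA) h6
    -- decompose a vector along d and u
    have hdecomp : ∀ x : V, ∃ b a : ℝ, x = b • d + a • u := by
      intro x
      have hmem : x ∈ D ⊔ Dᗮ := by
        rw [Submodule.sup_orthogonal_of_hasOrthogonalProjection]; trivial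
      obtain ⟨p, hp, q, hq, hpq⟩ := Submodule.mem_sup.1 hmem
      obtain ⟨b, hb⟩ := Submodule.mem_span_singleton.1 (by rw [← hdspan]; exact hp)
      obtain ⟨a, ha⟩ := Submodule.mem_span_singleton.1 (by rw [← huspan]; exact hq)
      exact ⟨b, a, by rw [hb, ha, hpq]⟩
    -- all roots outside span α are orthogonal to α
    have horthα : ∀ γ ∈ Δ, γ ∉ ((ℝ ∙ α : Submodule ℝ V) : Set V) → ⟪α, γ⟫ = 0 := by
      intro γ hγ hγsp
      have hγS := hallout γ hγ
      have hNN : ⟪α, α⟫ = ⟪γ, γ⟫ := by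
        rw [real_inner_self_eq_norm_mul_norm, real_inner_self_eq_norm_mul_norm,
          hsl α hαΔ γ hγ]
      obtain ⟨b, a, hγeq⟩ := hdecomp γ
      obtain ⟨b', a', hαeq⟩ := hdecomp α
      have hud : ⟪u, d⟫ = 0 := by rw [real_inner_comm]; exact hdu
      have hdγ : ⟪d, γ⟫ = b * ⟪d, d⟫ := by
        rw [hγeq, inner_add_right, real_inner_smul_right, real_inner_smul_right, hdu]; ring
      have huγ : ⟪u, γ⟫ = a * ⟪u, u⟫ := by
        rw [hγeq, inner_add_right, real_inner_smul_right, real_inner_smul_right, hud]; ring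
      have hdα : ⟪d, α⟫ = b' * ⟪d, d⟫ := by
        rw [hαeq, inner_add_right, real_inner_smul_right, real_inner_smul_right, hdu]; ring
      have huα : ⟪u, α⟫ = a' * ⟪u, u⟫ := by
        rw [hαeq, inner_add_right, real_inner_smul_right, real_inner_smul_right, hud]; ring
      -- reduced E-equations
      have eγd : 2 * b ^ 2 * ⟪d, d⟫ = ⟪γ, γ⟫ := by
        have := hEd γ hγ hγS
        rw [hdγ] at this
        have h' : (2 * b ^ 2 * ⟪d, d⟫) * ⟪d, d⟫ = ⟪γ, γ⟫ * ⟪d, d⟫ := by linear_combination this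
        exact mul_right_cancel₀ hCd h'
      have eγu : 2 * a ^ 2 * ⟪u, u⟫ = ⟪γ, γ⟫ := by
        have := hEu γ hγ hγS
        rw [huγ] at this
        have h' : (2 * a ^ 2 * ⟪u, u⟫) * ⟪u, u⟫ = ⟪γ, γ⟫ * ⟪u, u⟫ := by linear_combination this
        exact mul_right_cancel₀ hCu h'
      have eαd : 2 * b' ^ 2 * ⟪d, d⟫ = ⟪α, α⟫ := by
        have := hEd α hαΔ hαS
        rw [hdα] at this
        have h' : (2 * b' ^ 2 * ⟪d, d⟫) * ⟪d, d⟫ = ⟪α, α⟫ * ⟪d, d⟫ := by ring_nf; nlinarith [this]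
        exact mul_right_cancel₀ hCd h'
      have eαu : 2 * a' ^ 2 * ⟪u, u⟫ = ⟪α, α⟫ := by
        have := hEu α hαΔ hαS
        rw [huα] at this
        have h' : (2 * a' ^ 2 * ⟪u, u⟫) * ⟪u, u⟫ = ⟪α, α⟫ * ⟪u, u⟫ := by ring_nf; nlinarith [this]
        exact mul_right_cancel₀ hCu h'
      have hinner : ⟪α, γ⟫ = b' * b * ⟪d, d⟫ + a' * a * ⟪u, u⟫ := by
        rw [hαeq, hγeq, inner_add_left, inner_add_right, inner_add_right,
          real_inner_smul_left, real_inner_smul_left, real_inner_smul_left,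
          real_inner_smul_left, real_inner_smul_right, real_inner_smul_right,
          real_inner_smul_right, real_inner_smul_right, hdu, hud]
        ring
      set N := ⟪α, α⟫ with hN
      -- X = b'*b*⟪d,d⟫ satisfies (2X - N)(2X + N) = 0
      have hX : (2 * (b' * b * ⟪d, d⟫) - N) * (2 * (b' * b * ⟪d, d⟫) + N) = 0 := by
        have : ⟪γ, γ⟫ = N := hNN.symm
        linear_combination (2 * b ^ 2 * ⟪d, d⟫) * eαd + N * eγd + N * this
      have hY : (2 * (a' * a * ⟪u, u⟫) - N) * (2 * (a' * a * ⟪u, u⟫) + N) = 0 := by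
        have : ⟪γ, γ⟫ = N := hNN.symm
        linear_combination (2 * a ^ 2 * ⟪u, u⟫) * eαu + N * eγu + N * this
      have hXor : 2 * (b' * b * ⟪d, d⟫) = N ∨ 2 * (b' * b * ⟪d, d⟫) = -N := by
        rcases mul_eq_zero.1 hX with h | h
        · left; linarith
        · right; linarith
      have hYor : 2 * (a' * a * ⟪u, u⟫) = N ∨ 2 * (a' * a * ⟪u, u⟫) = -N := by
        rcases mul_eq_zero.1 hY with h | h
        · left; linarith
        · right; linarith
      have hNnorm : N = ‖α‖ * ‖γ‖ := by
        rw [hN, real_inner_self_eq_norm_mul_norm, hsl α hαΔ γ hγ]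
      have hα0 : α ≠ 0 := hQ α hαΔ
      rcases hXor with hx | hx <;> rcases hYor with hy | hy
      · exfalso
        have : ⟪α, γ⟫ = ‖α‖ * ‖γ‖ := by rw [← hNnorm]; rw [hinner]; linarith
        exact hγsp (mem_span_of_inner_eq α γ hα0 (Or.inl this))
      · rw [hinner]; linarith
      · rw [hinner]; linarith
      · exfalso
        have : ⟪α, γ⟫ = -(‖α‖ * ‖γ‖) := by rw [← hNnorm]; rw [hinner]; linarith
        exact hγsp (mem_span_of_inner_eq α γ hα0 (Or.inr this))
    -- conclude with irreducibility
    have hsplit : Δ = (Δ ∩ ((ℝ ∙ α : Submodule ℝ V) : Set V)) ∪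
        (Δ \ ((ℝ ∙ α : Submodule ℝ V) : Set V)) := by
      rw [Set.inter_union_diff]
    have horth2 : ∀ a ∈ Δ ∩ ((ℝ ∙ α : Submodule ℝ V) : Set V),
        ∀ b ∈ Δ \ ((ℝ ∙ α : Submodule ℝ V) : Set V), ⟪a, b⟫ = 0 := by
      intro x hx y hy
      obtain ⟨c, hc⟩ := Submodule.mem_span_singleton.1 hx.2
      rw [← hc, real_inner_smul_left, horthα y hy.1 hy.2, mul_zero]
    rcases hirr _ _ hsplit horth2 with h | h
    · rw [Set.eq_empty_iff_forall_notMem] at h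
      exact h α ⟨hαΔ, Submodule.mem_span_singleton_self α⟩
    · have hsub : Δ ⊆ ((ℝ ∙ α : Submodule ℝ V) : Set V) := by
        intro x hx
        by_contra hxs
        rw [Set.eq_empty_iff_forall_notMem] at h
        exact h x ⟨hx, hxs⟩
      have htop : (ℝ ∙ α : Submodule ℝ V) = ⊤ :=
        top_le_iff.mp (hRS.span_top ▸ Submodule.span_le.2 hsub)
      have : Module.finrank ℝ V = 1 := by
        rw [← finrank_top ℝ V, ← htop, finrank_span_singleton (hQ α hαΔ)]
      omega
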